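/- One-step sufficient decrease of the GPU-efficient L-BFGS-B iteration (core of Theorem 1): Let f : ℝⁿ → ℝ be differentiable with L-Lipschitz continuous gradient (L > 0), let l, u ∈ ℝⁿ with l_i ≤ u_i, let 0 < ε ≤ L and 0 < c ≤ C. Let x be feasible, let S = S(x) be the working set, let M be a symmetric real matrix indexed by S × S with c‖v‖² ≤ vᵀ M v ≤ C‖v‖² for all v, and let d ∈ ℝⁿ satisfy d_i = 0 for i ∉ S and M d[S] = −∇f(x)[S]. Assume ‖∇f(x)[S]‖ ≥ ε. Suppose p ∈ ℝⁿ satisfies either (case A) x + p is feasible, ⟨p, ∇f(x)⟩ ≤ −ε‖p‖² and ‖p‖² ≥ ε, or (case B) p is the projected direction of d, i.e., p_i = 0 if (d_i < 0 and x_i ≤ l_i + ε) or (d_i > 0 and x_i ≥ u_i − ε), and p_i = d_i otherwise. Then there exists a step size α > 0 such that x + αp is feasible and f(x + αp) ≤ f(x) − min(ε³/(2L), c²ε²/(2LC²), ε²c/(2C)). -/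

import Mathlib

open scoped RealInnerProductSpace Classical
open Matrix

lemma line_deriv {E : Type*} [NormedAddCommGroup E] [InnerProductSpace ℝ E] [CompleteSpace E]
    (f : E → ℝ) (hf : Differentiable ℝ f) (x v : E) (t : ℝ) :
    HasDerivAt (fun s : ℝ => f (x + s • v)) ⟪gradient f (x + t • v), v⟫ t := by
  have hline : HasDerivAt (fun s : ℝ => x + s • v) v t := by
    simpa using ((hasDerivAt_id t).smul_const v).const_add x
  have hfd : HasFDerivAt f ((InnerProductSpace.toDual ℝ E) (gradient f (x + t • v))) (x + t • v) :=
    (hasGradientAt_iff_hasFDerivAt.mp (hf _).hasGradientAt)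
  exact (hfd.comp_hasDerivAt t hline).congr_deriv (by simp)

lemma descent_lemma {E : Type*} [NormedAddCommGroup E] [InnerProductSpace ℝ E] [CompleteSpace E]
    (f : E → ℝ) (L : ℝ) (hf : Differentiable ℝ f)
    (hlip : ∀ x y : E, ‖gradient f x - gradient f y‖ ≤ L * ‖x - y‖)
    (x v : E) :
    f (x + v) ≤ f x + ⟪gradient f x, v⟫ + L / 2 * ‖v‖ ^ 2 := by
  set h : ℝ → ℝ := fun t => f (x + t • v) - t * ⟪gradient f x, v⟫ - L * t ^ 2 / 2 * ‖v‖ ^ 2 with hh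
  have hder : ∀ t : ℝ, HasDerivAt h
      (⟪gradient f (x + t • v), v⟫ - ⟪gradient f x, v⟫ - L * t * ‖v‖ ^ 2) t := by
    intro t
    have h1 := line_deriv f hf x v t
    have h2 : HasDerivAt (fun s : ℝ => s * ⟪gradient f x, v⟫) ⟪gradient f x, v⟫ t := by
      simpa using (hasDerivAt_id t).mul_const ⟪gradient f x, v⟫
    have h3 : HasDerivAt (fun s : ℝ => L * s ^ 2 / 2 * ‖v‖ ^ 2) (L * t * ‖v‖ ^ 2) t := by
      have := ((hasDerivAt_pow 2 t).const_mul L).div_const 2 |>.mul_const (‖v‖ ^ 2)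
      exact this.congr_deriv (by rw [show (2:ℕ) - 1 = 1 from rfl]; push_cast; ring)
    exact (h1.sub h2).sub h3
  have hanti : AntitoneOn h (Set.Icc (0:ℝ) 1) := by
    apply antitoneOn_of_deriv_nonpos (convex_Icc 0 1)
    · exact fun t _ => ((hder t).continuousAt).continuousWithinAt
    · exact fun t _ => ((hder t).differentiableAt).differentiableWithinAt
    · intro t ht
      rw [interior_Icc] at ht
      rw [(hder t).deriv]
      have key : ⟪gradient f (x + t • v) - gradient f x, v⟫ ≤ L * t * ‖v‖ ^ 2 := by
        calc ⟪gradient f (x + t • v) - gradient f x, v⟫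
            ≤ ‖gradient f (x + t • v) - gradient f x‖ * ‖v‖ := real_inner_le_norm _ _
          _ ≤ (L * ‖(x + t • v) - x‖) * ‖v‖ := by gcongr; exact hlip _ _
          _ = L * t * ‖v‖ ^ 2 := by
              rw [add_sub_cancel_left, norm_smul, Real.norm_eq_abs, abs_of_pos ht.1]; ring
      have := inner_sub_left (𝕜 := ℝ) (gradient f (x + t • v)) (gradient f x) v
      linarith [key, this]
  have h01 := hanti (Set.left_mem_Icc.mpr zero_le_one) (Set.right_mem_Icc.mpr zero_le_one) zero_le_one
  simp only [hh, zero_smul, add_zero, one_smul, zero_mul, zero_pow, mul_zero, sub_zero,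
    one_pow, mul_one, zero_div] at h01
  linarith

lemma dot_mulVec_comm {m : Type*} [Fintype m] (M : Matrix m m ℝ) (hsymm : M.IsSymm)
    (v w : m → ℝ) : v ⬝ᵥ M.mulVec w = w ⬝ᵥ M.mulVec v := by
  rw [Matrix.dotProduct_mulVec, ← Matrix.mulVec_transpose, hsymm.eq, dotProduct_comm]

lemma aux_e1 (G Q : ℝ) (hQ : Q ≠ 0) : (G / Q) ^ 2 * Q = G ^ 2 / Q := by
  field_simp

lemma aux_e2 (G Q : ℝ) : 2 * (G / Q) * G = 2 * (G ^ 2 / Q) := by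
  rw [mul_assoc, div_mul_eq_mul_div, ← pow_two]

lemma aux_e3 (c L Dsq : ℝ) (hL : L ≠ 0) : (c / L) * (c / 2) * Dsq = c ^ 2 * Dsq / (2 * L) := by
  field_simp

lemma aux_e4 (ε D c Dsq : ℝ) (hD : D ≠ 0) (h2 : D ^ 2 = Dsq) :
    (ε / D) * (c / 2) * Dsq = ε * D * (c / 2) := by
  rw [← h2]; field_simp

lemma aux_e5 (ε c C : ℝ) (hC : C ≠ 0) : ε ^ 2 * c / (2 * C) = ε * (ε / C) * (c / 2) := by
  field_simp

set_option maxHeartbeats 1600000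

/-- The working set of free variables at a feasible point `x` for the
box constraints `l ≤ x ≤ u` and tolerance `ε`. -/
noncomputable def workingSet {n : ℕ} (l u : EuclideanSpace ℝ (Fin n)) (ε : ℝ)
    (f : EuclideanSpace ℝ (Fin n) → ℝ) (x : EuclideanSpace ℝ (Fin n)) :
    Finset (Fin n) :=
  Finset.univ.filter fun i =>
    ¬((x i ≤ l i + ε ∧ 0 ≤ gradient f x i) ∨ (u i - ε ≤ x i ∧ gradient f x i ≤ 0))

theorem stmt9 {n : ℕ} (hn : 1 ≤ n) (f : EuclideanSpace ℝ (Fin n) → ℝ) (L ε c C : ℝ)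
    (hL : 0 < L) (hf : Differentiable ℝ f)
    (hlip : ∀ x y : EuclideanSpace ℝ (Fin n),
      ‖gradient f x - gradient f y‖ ≤ L * ‖x - y‖)
    (l u : EuclideanSpace ℝ (Fin n)) (hlu : ∀ i, l i ≤ u i)
    (hε : 0 < ε) (hεL : ε ≤ L) (hc : 0 < c) (hcC : c ≤ C)
    (x : EuclideanSpace ℝ (Fin n)) (hfeas : ∀ i, l i ≤ x i ∧ x i ≤ u i)
    (S : Finset (Fin n)) (hS : S = workingSet l u ε f x)
    (M : Matrix S S ℝ) (hsymm : M.IsSymm)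
    (hlb : ∀ v : S → ℝ, c * (∑ i, v i ^ 2) ≤ v ⬝ᵥ M.mulVec v)
    (hub : ∀ v : S → ℝ, v ⬝ᵥ M.mulVec v ≤ C * (∑ i, v i ^ 2))
    (d : EuclideanSpace ℝ (Fin n)) (hd0 : ∀ i, i ∉ S → d i = 0)
    (heq : M.mulVec (fun i : S => d i) = fun i : S => -(gradient f x i))
    (hgrad : ε ≤ Real.sqrt (∑ i ∈ S, gradient f x i ^ 2))
    (p : EuclideanSpace ℝ (Fin n))
    (hp : ((∀ i, l i ≤ (x + p) i ∧ (x + p) i ≤ u i) ∧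
            ⟪p, gradient f x⟫ ≤ -ε * ‖p‖ ^ 2 ∧ ε ≤ ‖p‖ ^ 2) ∨
          ((∀ i, ((d i < 0 ∧ x i ≤ l i + ε) ∨ (0 < d i ∧ u i - ε ≤ x i)) → p i = 0) ∧
           (∀ i, ¬((d i < 0 ∧ x i ≤ l i + ε) ∨ (0 < d i ∧ u i - ε ≤ x i)) → p i = d i))) :
    ∃ α : ℝ, 0 < α ∧ (∀ i, l i ≤ (x + α • p) i ∧ (x + α • p) i ≤ u i) ∧
      f (x + α • p) ≤
        f x - min (ε ^ 3 / (2 * L))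
          (min (c ^ 2 * ε ^ 2 / (2 * L * C ^ 2)) (ε ^ 2 * c / (2 * C))) := by
  have hC : 0 < C := hc.trans_le hcC
  set g : EuclideanSpace ℝ (Fin n) := gradient f x with hg
  set m3 : ℝ := min (ε ^ 3 / (2 * L))
      (min (c ^ 2 * ε ^ 2 / (2 * L * C ^ 2)) (ε ^ 2 * c / (2 * C))) with hm3
  clear_value g m3
  have hdesc : ∀ α : ℝ, 0 ≤ α →
      f (x + α • p) ≤ f x + α * ⟪p, g⟫ + L / 2 * α ^ 2 * ‖p‖ ^ 2 := by
    intro α hα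
    have h := descent_lemma f L hf hlip x (α • p)
    have h1 : ⟪g, α • p⟫ = α * ⟪p, g⟫ := by
      rw [real_inner_smul_right, real_inner_comm]
    have h2 : ‖α • p‖ ^ 2 = α ^ 2 * ‖p‖ ^ 2 := by
      rw [norm_smul, mul_pow, Real.norm_eq_abs, sq_abs]
    rw [← hg, h1, h2] at h
    linarith
  rcases hp with ⟨hfeasA, hpgA, hpnA⟩ | ⟨hz, hnz⟩
  · -- Case A
    refine ⟨ε / L, by positivity, ?_, ?_⟩
    · intro i
      have h1 := (hfeasA i).1
      have h2 := (hfeasA i).2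
      have h3 := (hfeas i).1
      have h4 := (hfeas i).2
      simp only [PiLp.add_apply, PiLp.smul_apply, smul_eq_mul] at h1 h2 ⊢
      have hα1 : ε / L ≤ 1 := (div_le_one hL).mpr hεL
      have hα0 : 0 < ε / L := by positivity
      constructor <;> nlinarith
    · have hd := hdesc (ε / L) (by positivity)
      have hmin : m3 ≤ ε ^ 3 / (2 * L) := by rw [hm3]; exact min_le_left _ _
      have e1 : (ε / L) * ε * ‖p‖ ^ 2 - L / 2 * (ε / L) ^ 2 * ‖p‖ ^ 2
          = ε ^ 2 * ‖p‖ ^ 2 / (2 * L) := by field_simp; ring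
      have key : ε ^ 3 / (2 * L) ≤ (ε / L) * ε * ‖p‖ ^ 2 - L / 2 * (ε / L) ^ 2 * ‖p‖ ^ 2 := by
        rw [e1, div_le_div_iff₀ (by positivity) (by positivity)]
        nlinarith [mul_le_mul_of_nonneg_left hpnA (show (0:ℝ) ≤ ε ^ 2 * (2 * L) by positivity)]
      have h5 : (ε / L) * ⟪p, g⟫ ≤ (ε / L) * (-ε * ‖p‖ ^ 2) :=
        mul_le_mul_of_nonneg_left hpgA (by positivity)
      have h6 : (ε / L) * (-ε * ‖p‖ ^ 2) = -((ε / L) * ε * ‖p‖ ^ 2) := by ring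
      linarith
  · -- Case B
    set Dsq : ℝ := ∑ i ∈ S, d i ^ 2 with hDsqdef
    set Gsq : ℝ := ∑ i ∈ S, g i ^ 2 with hGsqdef
    have hDsq0 : 0 ≤ Dsq := Finset.sum_nonneg fun i _ => sq_nonneg _
    have hGsq0 : 0 ≤ Gsq := Finset.sum_nonneg fun i _ => sq_nonneg _
    have hεG : ε ^ 2 ≤ Gsq := by
      nlinarith [Real.sq_sqrt hGsq0, Real.sqrt_nonneg Gsq, hgrad, hε]
    -- basic sums on subtype
    have hsd : ∑ i : S, d i.1 ^ 2 = Dsq := Finset.sum_coe_sort S fun i => d i ^ 2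
    have hsg : ∑ i : S, g i.1 ^ 2 = Gsq := Finset.sum_coe_sort S fun i => g i ^ 2
    have hdsquniv : ∑ i, d i ^ 2 = Dsq := by
      rw [hDsqdef]
      exact (Finset.sum_subset (Finset.subset_univ S) fun i _ hi => by
        rw [hd0 i hi]; ring).symm
    clear_value Dsq Gsq
    -- (1) ∑ d*g ≤ -(c*Dsq)
    have hdg : ∑ i ∈ S, d i * g i ≤ -(c * Dsq) := by
      have h := hlb (fun i : S => d i)
      rw [heq] at h
      have e1 : (fun i : S => d i.1) ⬝ᵥ (fun i : S => -(g i.1)) = -∑ i : S, d i.1 * g i.1 := by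
        simp [dotProduct, mul_neg]
      rw [e1, hsd] at h
      rw [Finset.sum_coe_sort S fun i => d i * g i] at h
      linarith
    -- bounds on quadratic form pieces
    have hA : (fun i : S => g i.1) ⬝ᵥ M.mulVec (fun i : S => g i.1) ≤ C * Gsq := by
      have := hub (fun i : S => g i)
      rwa [hsg] at this
    have hBub : (fun i : S => d i.1) ⬝ᵥ M.mulVec (fun i : S => d i.1) ≤ C * Dsq := by
      have := hub (fun i : S => d i)
      rwa [hsd] at this
    have hcross : (fun i : S => g i.1) ⬝ᵥ M.mulVec (fun i : S => d i.1) = -Gsq := by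
      rw [heq]
      have e1 : (fun i : S => g i.1) ⬝ᵥ (fun i : S => -(g i.1)) = -∑ i : S, g i.1 ^ 2 := by
        simp [dotProduct, mul_neg, ← pow_two]
      rw [e1, hsg]
    have hcross' : (fun i : S => d i.1) ⬝ᵥ M.mulVec (fun i : S => g i.1) = -Gsq := by
      rw [dot_mulVec_comm M hsymm, hcross]
    have hBlb : 0 ≤ (fun i : S => d i.1) ⬝ᵥ M.mulVec (fun i : S => d i.1) := by
      have h := hlb (fun i : S => d i)
      rw [hsd] at h
      exact (mul_nonneg hc.le hDsq0).trans h
    -- quadratic inequality in t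
    have hB : ∀ t : ℝ, 0 ≤ C * Gsq - 2 * t * Gsq + t ^ 2 * (C * Dsq) := by
      intro t
      have hvec : (fun i : S => g i.1 + t * d i.1)
          = (fun i : S => g i.1) + t • (fun i : S => d i.1) := by
        funext i
        simp [Pi.add_apply, Pi.smul_apply, smul_eq_mul]
      have h0 : 0 ≤ c * ∑ i : S, (g i.1 + t * d i.1) ^ 2 := by positivity
      have h1 := hlb (fun i : S => g i.1 + t * d i.1)
      have h2 : (fun i : S => g i.1 + t * d i.1) ⬝ᵥ
            M.mulVec (fun i : S => g i.1 + t * d i.1)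
          = (fun i : S => g i.1) ⬝ᵥ M.mulVec (fun i : S => g i.1)
            + t * ((fun i : S => g i.1) ⬝ᵥ M.mulVec (fun i : S => d i.1))
            + t * ((fun i : S => d i.1) ⬝ᵥ M.mulVec (fun i : S => g i.1))
            + t ^ 2 * ((fun i : S => d i.1) ⬝ᵥ M.mulVec (fun i : S => d i.1)) := by
        simp only [hvec, Matrix.mulVec_add, Matrix.mulVec_smul, add_dotProduct,
          smul_dotProduct, dotProduct_add, dotProduct_smul,
          smul_eq_mul]
        ring
      rw [h2, hcross, hcross'] at h1
      have h3 : t ^ 2 * ((fun i : S => d i.1) ⬝ᵥ M.mulVec (fun i : S => d i.1))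
          ≤ t ^ 2 * (C * Dsq) := mul_le_mul_of_nonneg_left hBub (sq_nonneg t)
      linarith [h0, h1, hA, h3]
    -- Dsq > 0
    have hDsq_pos : 0 < Dsq := by
      rcases hDsq0.lt_or_eq with h | h
      · exact h
      · exfalso
        rw [hDsqdef] at h
        have hdz : ∀ i ∈ S, d i = 0 := by
          intro i hi
          have := (Finset.sum_eq_zero_iff_of_nonneg fun j _ => sq_nonneg (d j)).mp h.symm i hi
          exact pow_eq_zero_iff (n := 2) (by norm_num) |>.mp this
        have hdz' : (fun i : S => d i.1) = 0 := by
          funext i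
          exact hdz i.1 i.2
        have hgz : ∀ i : S, g i.1 = 0 := by
          intro i
          have := congrFun heq i
          rw [hdz', Matrix.mulVec_zero] at this
          have : (0 : ℝ) = -(g i.1) := this
          linarith
        have : Gsq = 0 := by
          rw [hGsqdef, ← Finset.sum_coe_sort S fun i => g i ^ 2]
          exact Finset.sum_eq_zero fun i _ => by rw [hgz i]; ring
        linarith [hεG, this, pow_pos hε 2]
    clear hA hBub hcross hcross' hBlb hlb hub heq hsymm M
    -- Gsq ≤ C^2 * Dsq
    have hGD : Gsq ≤ C ^ 2 * Dsq := by
      have hQ : 0 < C * Dsq := mul_pos hC hDsq_pos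
      have h := hB (Gsq / (C * Dsq))
      have e1 : (Gsq / (C * Dsq)) ^ 2 * (C * Dsq) = Gsq ^ 2 / (C * Dsq) :=
        aux_e1 _ _ hQ.ne'
      have e2 : 2 * (Gsq / (C * Dsq)) * Gsq = 2 * (Gsq ^ 2 / (C * Dsq)) :=
        aux_e2 _ _
      rw [e1, e2] at h
      have h4 : Gsq ^ 2 / (C * Dsq) ≤ C * Gsq := by linarith
      rw [div_le_iff₀ hQ] at h4
      have hGsq_pos : 0 < Gsq := lt_of_lt_of_le (by positivity) hεG
      have h5 : Gsq * Gsq ≤ Gsq * (C ^ 2 * Dsq) := by linarith only [h4]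
      exact le_of_mul_le_mul_left h5 hGsq_pos
    set D : ℝ := Real.sqrt Dsq with hDdef
    have hD2 : D ^ 2 = Dsq := Real.sq_sqrt hDsq_pos.le
    have hD0 : 0 < D := Real.sqrt_pos.mpr hDsq_pos
    clear_value D
    have hεCD : ε / C ≤ D := by
      have h1 : ε ^ 2 ≤ C ^ 2 * Dsq := hεG.trans hGD
      rw [div_le_iff₀ hC]
      have h2 : ε ^ 2 ≤ (D * C) ^ 2 := by
        rw [mul_pow, hD2]
        linarith only [h1]
      exact le_of_pow_le_pow_left₀ two_ne_zero (mul_nonneg hD0.le hC.le) h2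
    -- inner product bound
    have hinner : ⟪p, g⟫ = ∑ i, p i * g i := by
      rw [PiLp.inner_apply]
      exact Finset.sum_congr rfl fun i _ => by simp [RCLike.inner_apply, mul_comm]
    have hnormp : ‖p‖ ^ 2 = ∑ i, p i ^ 2 := by
      rw [← real_inner_self_eq_norm_sq]
      rw [PiLp.inner_apply]
      exact Finset.sum_congr rfl fun i _ => by simp [RCLike.inner_apply, sq]
    have hpt : ∀ i, p i * g i ≤ d i * g i := by
      intro i
      by_cases hcond : (d i < 0 ∧ x i ≤ l i + ε) ∨ (0 < d i ∧ u i - ε ≤ x i)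
      · rw [hz i hcond, zero_mul]
        by_cases hiS : i ∈ S
        · rw [hS, workingSet, Finset.mem_filter] at hiS
          have hiS2 := hiS.2
          rw [← hg] at hiS2
          push_neg at hiS2
          rcases hcond with ⟨hd1, hx1⟩ | ⟨hd1, hx1⟩
          · have hgi : g i < 0 := hiS2.1 hx1
            nlinarith
          · have hgi : 0 < g i := hiS2.2 hx1
            nlinarith
        · rw [hd0 i hiS, zero_mul]
      · rw [hnz i hcond]
    have hdguniv : ∑ i, d i * g i = ∑ i ∈ S, d i * g i :=
      (Finset.sum_subset (Finset.subset_univ S) fun i _ hi => by rw [hd0 i hi, zero_mul]).symm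
    have hpg : ⟪p, g⟫ ≤ -(c * Dsq) := by
      rw [hinner]
      calc ∑ i, p i * g i ≤ ∑ i, d i * g i := Finset.sum_le_sum fun i _ => hpt i
        _ = ∑ i ∈ S, d i * g i := hdguniv
        _ ≤ -(c * Dsq) := hdg
    -- norm bound
    have hpd2 : ∀ i, p i ^ 2 ≤ d i ^ 2 := by
      intro i
      by_cases hcond : (d i < 0 ∧ x i ≤ l i + ε) ∨ (0 < d i ∧ u i - ε ≤ x i)
      · rw [hz i hcond]
        simpa using sq_nonneg (d i)
      · rw [hnz i hcond]
    have hnpD : ‖p‖ ^ 2 ≤ Dsq := by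
      rw [hnormp, ← hdsquniv]
      exact Finset.sum_le_sum fun i _ => hpd2 i
    have hpiD : ∀ i, -D ≤ p i ∧ p i ≤ D := by
      intro i
      have h1 : p i ^ 2 ≤ Dsq := by
        have := Finset.single_le_sum (f := fun j => p j ^ 2)
          (fun j _ => sq_nonneg (p j)) (Finset.mem_univ i)
        rw [← hnormp] at this
        exact this.trans hnpD
      constructor <;> nlinarith
    -- the step size
    set α : ℝ := min (c / L) (ε / D) with hαdef
    have hα0 : 0 < α := lt_min (div_pos hc hL) (div_pos hε hD0)
    have hαεD : α ≤ ε / D := min_le_right _ _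
    have hαcL : α ≤ c / L := min_le_left _ _
    have hαD : α * D ≤ ε := (le_div_iff₀ hD0).mp hαεD
    have hαL : α * L ≤ c := (le_div_iff₀ hL).mp hαcL
    refine ⟨α, hα0, ?_, ?_⟩
    · -- feasibility
      intro i
      have hlb1 : -ε ≤ α * p i := by nlinarith [(hpiD i).1, hα0.le]
      have hub1 : α * p i ≤ ε := by nlinarith [(hpiD i).2, hα0.le]
      simp only [PiLp.add_apply, PiLp.smul_apply, smul_eq_mul]
      by_cases hcond : (d i < 0 ∧ x i ≤ l i + ε) ∨ (0 < d i ∧ u i - ε ≤ x i)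
      · rw [hz i hcond, mul_zero, add_zero]
        exact hfeas i
      · have hpi : p i = d i := hnz i hcond
        push_neg at hcond
        rcases lt_trichotomy (d i) 0 with hd1 | hd1 | hd1
        · have hx1 : l i + ε < x i := hcond.1 hd1
          have hneg : α * p i ≤ 0 := by
            rw [hpi]; nlinarith [hα0.le]
          exact ⟨by linarith, by linarith [(hfeas i).2]⟩
        · rw [hpi, hd1, mul_zero, add_zero]
          exact hfeas i
        · have hx1 : x i < u i - ε := hcond.2 hd1
          have hpos : 0 ≤ α * p i := by
            rw [hpi]; nlinarith [hα0.le]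
          exact ⟨by linarith [(hfeas i).1], by linarith⟩
    · -- decrease
      have hd := hdesc α hα0.le
      have h1 : α * ⟪p, g⟫ ≤ α * (-(c * Dsq)) := mul_le_mul_of_nonneg_left hpg hα0.le
      have h2 : L / 2 * α ^ 2 * ‖p‖ ^ 2 ≤ L / 2 * α ^ 2 * Dsq :=
        mul_le_mul_of_nonneg_left hnpD (by positivity)
      have hhalf : α * (c / 2) * Dsq ≤ α * c * Dsq - L / 2 * α ^ 2 * Dsq := by
        nlinarith [mul_le_mul_of_nonneg_right hαL
          (show (0:ℝ) ≤ α * Dsq / 2 from div_nonneg (mul_nonneg hα0.le hDsq0) (by norm_num))]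
      have hkey : m3 ≤ α * (c / 2) * Dsq := by
        rcases min_cases (c / L) (ε / D) with ⟨hαeq, _⟩ | ⟨hαeq, _⟩
        · have e : (c / L) * (c / 2) * Dsq = c ^ 2 * Dsq / (2 * L) := by
            field_simp
          have hεC2D : ε ^ 2 ≤ C ^ 2 * Dsq := hεG.trans hGD
          have h6 : c ^ 2 * ε ^ 2 / (2 * L * C ^ 2) ≤ c ^ 2 * Dsq / (2 * L) := by
            rw [div_le_div_iff₀ (by positivity) (by positivity)]
            nlinarith [mul_le_mul_of_nonneg_left hεC2D
              (show (0:ℝ) ≤ 2 * L * c ^ 2 by positivity)]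
          have hm : m3 ≤ c ^ 2 * ε ^ 2 / (2 * L * C ^ 2) := by
            rw [hm3]; exact (min_le_right _ _).trans (min_le_left _ _)
          rw [hαdef, hαeq, e]
          linarith
        · have e : (ε / D) * (c / 2) * Dsq = ε * D * (c / 2) := by
            rw [← hD2]; field_simp
          have h6 : ε ^ 2 * c / (2 * C) ≤ ε * D * (c / 2) := by
            have e2 : ε ^ 2 * c / (2 * C) = ε * (ε / C) * (c / 2) :=
              aux_e5 _ _ _ hC.ne'
            rw [e2]
            nlinarith [mul_le_mul_of_nonneg_left hεCD
              (show (0:ℝ) ≤ ε * (c / 2) by positivity)]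
          have hm : m3 ≤ ε ^ 2 * c / (2 * C) := by
            rw [hm3]; exact (min_le_right _ _).trans (min_le_right _ _)
          rw [hαdef, hαeq, e]
          linarith
      linarith
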